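/- For every σ > 0 there exists a real constant K₀ = K₀(σ) > 2 with the following property: for all real numbers α, β, θ with α > 0 and |β| ≥ σ, and for every real K ≥ K₀, the function I_K(r) := ∫_r^{K·r} cos²(α·log s + θ)·s^{2β−1} ds satisfies I_K(K²·r) − 2·I_K(K·r) + I_K(r) > 0 for every r > 0. -/

import Mathlib

open MeasureTheory

/-! Auxiliary definitions and lemmas -/

noncomputable def Fant (α β θ : ℝ) (s : ℝ) : ℝ :=
  s ^ (2*β) * (1/(4*β) +
    (β * Real.cos (2*α*Real.log s + 2*θ) + α * Real.sin (2*α*Real.log s + 2*θ)) / (4*(α^2+β^2)))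

lemma Fant_deriv (α β θ : ℝ) (hα : 0 < α) (hβ : β ≠ 0) {s : ℝ} (hs : 0 < s) :
    HasDerivAt (Fant α β θ) (Real.cos (α*Real.log s + θ)^2 * s^(2*β-1)) s := by
  have hD : (4*(α^2+β^2)) ≠ 0 := by positivity
  have hL : HasDerivAt (fun s => 2*α*Real.log s + 2*θ) (2*α*s⁻¹) s :=
    (((Real.hasDerivAt_log hs.ne').const_mul (2*α)).add_const (2*θ))
  have hcos : HasDerivAt (fun s => Real.cos (2*α*Real.log s + 2*θ))
      (-Real.sin (2*α*Real.log s + 2*θ) * (2*α*s⁻¹)) s :=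
    (Real.hasDerivAt_cos _).comp s hL
  have hsin : HasDerivAt (fun s => Real.sin (2*α*Real.log s + 2*θ))
      (Real.cos (2*α*Real.log s + 2*θ) * (2*α*s⁻¹)) s :=
    (Real.hasDerivAt_sin _).comp s hL
  have hpow : HasDerivAt (fun s : ℝ => s ^ (2*β)) ((2*β) * s ^ (2*β-1)) s :=
    Real.hasDerivAt_rpow_const (Or.inl hs.ne')
  have h2 : HasDerivAt (fun s => 1/(4*β) +
      (β * Real.cos (2*α*Real.log s + 2*θ) + α * Real.sin (2*α*Real.log s + 2*θ)) / (4*(α^2+β^2)))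
      ((β * (-Real.sin (2*α*Real.log s + 2*θ) * (2*α*s⁻¹))
        + α * (Real.cos (2*α*Real.log s + 2*θ) * (2*α*s⁻¹))) / (4*(α^2+β^2))) s := by
    exact (((hcos.const_mul β).add (hsin.const_mul α)).div_const _).const_add _
  have := hpow.mul h2
  refine this.congr_deriv ?_
  have hs1 : s ^ (2*β) = s ^ (2*β-1) * s := by
    rw [← Real.rpow_add_one hs.ne']; ring_nf
  have hc2 : Real.cos (α*Real.log s + θ)^2 = 1/2 + Real.cos (2*α*Real.log s + 2*θ)/2 := by
    rw [Real.cos_sq]; ring_nf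
  rw [hc2, hs1]
  field_simp
  ring

lemma integral_eq (α β θ : ℝ) (hα : 0 < α) (hβ : β ≠ 0) {a b : ℝ} (ha : 0 < a) (hb : 0 < b) :
    ∫ s in a..b, Real.cos (α*Real.log s + θ)^2 * s^(2*β-1) = Fant α β θ b - Fant α β θ a := by
  have hsub : ∀ x ∈ Set.uIcc a b, 0 < x := fun x hx =>
    lt_of_lt_of_le (lt_min ha hb) hx.1
  apply intervalIntegral.integral_eq_sub_of_hasDerivAt
  · exact fun x hx => Fant_deriv α β θ hα hβ (hsub x hx)
  · apply ContinuousOn.intervalIntegrable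
    intro x hx
    have hx0 := hsub x hx
    apply ContinuousAt.continuousWithinAt
    exact ((Real.continuous_cos.continuousAt.comp
      (((Real.continuousAt_log hx0.ne').const_mul α).add continuousAt_const)).pow 2).mul
      (Real.continuousAt_rpow_const x _ (Or.inl hx0.ne'))

lemma osc_num (α β p ψ x : ℝ) :
    (p^3 * (β * Real.cos (x+3*ψ) + α * Real.sin (x+3*ψ))
      - 3*p^2 * (β * Real.cos (x+2*ψ) + α * Real.sin (x+2*ψ))
      + 3*p * (β * Real.cos (x+ψ) + α * Real.sin (x+ψ))
      - (β * Real.cos x + α * Real.sin x))^2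
    ≤ (α^2+β^2) * (p^2 - 2*p*Real.cos ψ + 1)^3 := by
  set w : ℂ := (β:ℂ) - α * Complex.I with hw
  set e : ℝ → ℂ := fun y => Complex.exp (y * Complex.I) with he
  have e_add : ∀ a b : ℝ, e (a+b) = e a * e b := by
    intro a b
    simp only [he, ← Complex.exp_add]
    congr 1
    push_cast
    ring
  have h1 : ∀ y : ℝ, (w * e y).re = β * Real.cos y + α * Real.sin y := by
    intro y
    simp [he, hw, Complex.exp_mul_I, Complex.mul_re, Complex.sub_re, Complex.sub_im,
      Complex.cos_ofReal_re, Complex.sin_ofReal_re, Complex.add_re, Complex.add_im,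
      Complex.mul_im, ← Complex.ofReal_cos, ← Complex.ofReal_sin]
  have h2 : w * e x * ((p:ℂ) * e ψ - 1)^3
      = (p:ℂ)^3 * (w * e (x+3*ψ)) - 3*(p:ℂ)^2 * (w * e (x+2*ψ))
        + 3*(p:ℂ) * (w * e (x+ψ)) - w * e x := by
    have h3 : e (x + 3*ψ) = e x * (e ψ)^3 := by
      have : x + 3*ψ = ((x + ψ) + ψ) + ψ := by ring
      rw [this, e_add, e_add, e_add]; ring
    have h4 : e (x + 2*ψ) = e x * (e ψ)^2 := by
      have : x + 2*ψ = (x + ψ) + ψ := by ring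
      rw [this, e_add, e_add]; ring
    rw [h3, h4, e_add]
    ring
  have hS : (p^3 * (β * Real.cos (x+3*ψ) + α * Real.sin (x+3*ψ))
      - 3*p^2 * (β * Real.cos (x+2*ψ) + α * Real.sin (x+2*ψ))
      + 3*p * (β * Real.cos (x+ψ) + α * Real.sin (x+ψ))
      - (β * Real.cos x + α * Real.sin x))
      = (w * e x * ((p:ℂ) * e ψ - 1)^3).re := by
    rw [h2]
    simp [Complex.add_re, Complex.sub_re, Complex.mul_re, ← Complex.ofReal_pow,
      Complex.ofReal_re, Complex.ofReal_im, h1]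
  rw [hS]
  have hre : ∀ z : ℂ, z.re^2 ≤ Complex.normSq z := by
    intro z; rw [Complex.normSq_apply]; nlinarith [sq_nonneg z.im]
  refine le_trans (hre _) ?_
  rw [map_mul, map_mul, map_pow]
  have hE : ∀ y : ℝ, Complex.normSq (e y) = 1 := by
    intro y
    have := Complex.norm_exp_ofReal_mul_I y
    have h := Complex.sq_norm (e y)
    rw [he] at *
    simp only at h
    rw [this] at h
    simpa using h.symm
  have hw2 : Complex.normSq w = α^2 + β^2 := by
    simp [hw, Complex.normSq_apply]
    ring
  have hZ : Complex.normSq ((p:ℂ) * e ψ - 1) = p^2 - 2*p*Real.cos ψ + 1 := by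
    simp [he, Complex.exp_mul_I, Complex.normSq_apply, Complex.sub_re, Complex.sub_im,
      Complex.mul_re, Complex.mul_im, ← Complex.ofReal_cos, ← Complex.ofReal_sin]
    nlinarith [Real.sin_sq_add_cos_sq ψ]
  rw [hE, hw2, hZ]
  ring_nf
  nlinarith [sq_nonneg p]

lemma sub_bound {u : ℝ} (hu : 2*10^7 ≤ u) : 400*u*(Real.log u)^2 ≤ (u-1)^2 := by
  have hu0 : (0:ℝ) < u := by nlinarith
  set w := u ^ ((1:ℝ)/6) with hwdef
  have hw0 : 0 < w := Real.rpow_pos_of_pos hu0 _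
  have hw6 : w ^ (6:ℕ) = u := by
    rw [hwdef, ← Real.rpow_natCast (u ^ ((1:ℝ)/6)) 6, ← Real.rpow_mul hu0.le]
    norm_num
  have hw16 : 16 ≤ w := by
    by_contra h
    push_neg at h
    have : w ^ (6:ℕ) < 16 ^ (6:ℕ) := pow_lt_pow_left₀ h hw0.le (by norm_num)
    rw [hw6] at this
    norm_num at this
    linarith
  have hlogu : Real.log u = 6 * Real.log w := by
    rw [← hw6, Real.log_pow]; push_cast; ring
  have hlw0 : 0 ≤ Real.log w := Real.log_nonneg (by linarith)
  have hlw : Real.log w ≤ w := (Real.log_le_sub_one_of_pos hw0).trans (by linarith)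
  have hlw2 : (Real.log w)^2 ≤ w^2 := by nlinarith
  have h1 : 400*u*(Real.log u)^2 ≤ 14400 * w^8 := by
    rw [hlogu, ← hw6]
    have : w^(6:ℕ) * (Real.log w)^2 ≤ w^6 * w^2 := by
      apply mul_le_mul_of_nonneg_left hlw2 (by positivity)
    nlinarith
  refine h1.trans ?_
  rw [← hw6]
  have h4 : (16:ℝ)^4 ≤ w^4 := pow_le_pow_left₀ (by norm_num) hw16 4
  have h68 : w^6 ≤ w^8 := pow_le_pow_right₀ (by linarith) (by norm_num)
  nlinarith [sq_nonneg w, pow_nonneg hw0.le 8, pow_nonneg hw0.le 6]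

set_option maxHeartbeats 1000000 in
lemma key (b α lam : ℝ) (hb : 0 < b) (hα : 0 < α) (hlam : 0 < lam)
    (hu : 2*10^7 ≤ Real.exp (2*b*lam)) :
    ((Real.exp (2*b*lam) - 1)^2 + 2*Real.exp (2*b*lam)*(1 - Real.cos (2*α*lam)))^3 * b^2
      < (Real.exp (2*b*lam) - 1)^6 * (α^2 + b^2) := by
  set u := Real.exp (2*b*lam) with hudef
  set ψ := 2*α*lam with hψdef
  have hu0 : (0:ℝ) < u := Real.exp_pos _
  have hu1 : (3:ℝ) ≤ u := by linarith
  have hc1 : 1 - Real.cos ψ ≤ 2 := by nlinarith [Real.neg_one_le_cos ψ]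
  have hc0 : 0 ≤ 1 - Real.cos ψ := by nlinarith [Real.cos_le_one ψ]
  have hL : Real.log u = 2*b*lam := Real.log_exp _
  set X := (u - 1)^2 + 2*u*(1 - Real.cos ψ) with hXdef
  have hX0 : 0 ≤ X := by positivity
  have hum : (0:ℝ) < u - 1 := by linarith
  have hu6 : (0:ℝ) < (u-1)^6 := pow_pos hum 6
  rcases le_or_gt (8*b) α with hcase | hcase
  · -- big α
    have hX1 : X ≤ (u+1)^2 := by nlinarith
    have hX3 : X^3 ≤ ((u+1)^2)^3 := pow_le_pow_left₀ hX0 hX1 3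
    have h2 : (u+1)^6 ≤ 64*(u-1)^6 := by nlinarith [sq_nonneg (u+1), sq_nonneg (u-1), sq_nonneg ((u+1)*(u-1))]
    have hα2 : 64*b^2 ≤ α^2 := by nlinarith
    have c1 : X^3*b^2 ≤ (u+1)^6*b^2 := by
      have : ((u+1)^2)^3 = (u+1)^6 := by ring
      nlinarith [mul_le_mul_of_nonneg_right hX3 (sq_nonneg b)]
    have c2 : (u+1)^6*b^2 ≤ 64*(u-1)^6*b^2 := by
      nlinarith [mul_le_mul_of_nonneg_right h2 (sq_nonneg b)]
    have c3 : 64*(u-1)^6*b^2 < (u-1)^6*(α^2+b^2) := by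
      nlinarith [mul_pos hu6 (pow_pos hb 2), mul_le_mul_of_nonneg_left hα2 hu6.le]
    linarith
  · -- small α
    have hψ2 : 1 - Real.cos ψ ≤ ψ^2/2 := by
      nlinarith [Real.one_sub_sq_div_two_le_cos (x := ψ)]
    have hψb : ψ^2 * b^2 = α^2 * (Real.log u)^2 := by rw [hL, hψdef]; ring
    set q := (u-1)^2 * b^2 with hqdef
    set y := u * α^2 * (Real.log u)^2 with hydef
    have hq0 : 0 < q := mul_pos (pow_pos hum 2) (pow_pos hb 2)
    have hLpos : 0 < Real.log u := by rw [hL]; positivity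
    have hy0 : 0 < y := by positivity
    have hXb : X * b^2 ≤ q + y := by
      have h1 : 2*u*(1 - Real.cos ψ) * b^2 ≤ u * ψ^2 * b^2 := by
        have := mul_le_mul_of_nonneg_left hψ2 (by positivity : (0:ℝ) ≤ 2*u*b^2)
        linarith
      nlinarith [h1, hψb]
    have h400 : 400 * y ≤ α^2 * (u-1)^2 := by
      have := sub_bound hu
      have := mul_le_mul_of_nonneg_left this (sq_nonneg α)
      nlinarith
    have hα64 : α^2 < 64*b^2 := by nlinarith
    have hyq : y < (4/25) * q := by
      have h2 : α^2*(u-1)^2 < 64*b^2*(u-1)^2 :=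
        mul_lt_mul_of_pos_right hα64 (pow_pos hum 2)
      rw [hqdef]; nlinarith
    have hcube : (X*b^2)^3 ≤ (q+y)^3 := pow_le_pow_left₀ (by positivity) hXb 3
    have hfin : (q+y)^3 < q^2 * (α^2*(u-1)^2) + q^3 := by
      have k1 : 3*q*y < (12/25)*q^2 := by nlinarith [mul_lt_mul_of_pos_left hyq hq0]
      have k2 : y^2 < (16/625)*q^2 := by nlinarith [mul_pos hq0 hy0]
      have k3 : 3*q^2 + 3*q*y + y^2 < 400*q^2 := by nlinarith [sq_nonneg q]
      have k4 : (3*q^2 + 3*q*y + y^2)*y < 400*q^2*y := mul_lt_mul_of_pos_right k3 hy0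
      have k5 : 400*q^2*y ≤ q^2*(α^2*(u-1)^2) := by
        nlinarith [mul_le_mul_of_nonneg_left h400 (sq_nonneg q)]
      nlinarith [k4, k5]
    have hgoal4 : X^3 * b^2 * b^4 < (u-1)^6 * (α^2+b^2) * b^4 := by
      have hrhs : q^2 * (α^2*(u-1)^2) + q^3 = (u-1)^6 * (α^2+b^2) * b^4 := by
        rw [hqdef]; ring
      calc X^3 * b^2 * b^4 = (X*b^2)^3 := by ring
        _ ≤ (q+y)^3 := hcube
        _ < q^2 * (α^2*(u-1)^2) + q^3 := hfin
        _ = (u-1)^6 * (α^2+b^2) * b^4 := hrhs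
    have hb4 : 0 < b^4 := by positivity
    exact lt_of_mul_lt_mul_right hgoal4 hb4.le

lemma key' (β α lam : ℝ) (hβ : β ≠ 0) (hα : 0 < α) (hlam : 0 < lam)
    (hu : 2*10^7 ≤ Real.exp (2 * |β| * lam)) :
    (Real.exp (2*β*lam)^2 - 2*Real.exp (2*β*lam)*Real.cos (2*α*lam) + 1)^3 * β^2
      < (Real.exp (2*β*lam) - 1)^6 * (α^2 + β^2) := by
  rcases hβ.lt_or_gt with hneg | hpos
  · -- β < 0
    set b := -β with hb
    have hb0 : 0 < b := by simp [hb]; linarith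
    have habs : |β| = b := abs_of_neg hneg
    rw [habs] at hu
    have hk := key b α lam hb0 hα hlam hu
    set u := Real.exp (2*b*lam) with hudef
    have hu0 : 0 < u := Real.exp_pos _
    have hp : Real.exp (2*β*lam) = u⁻¹ := by
      rw [hudef, ← Real.exp_neg]; congr 1; rw [hb]; ring
    rw [hp]
    have hu6 : (0:ℝ) < u^6 := by positivity
    rw [← mul_lt_mul_iff_of_pos_right hu6]
    have e1 : ((u⁻¹)^2 - 2*u⁻¹*Real.cos (2*α*lam) + 1)^3 * β^2 * u^6
        = ((u-1)^2 + 2*u*(1 - Real.cos (2*α*lam)))^3 * b^2 := by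
      have h : ((u⁻¹)^2 - 2*u⁻¹*Real.cos (2*α*lam) + 1) * u^2
          = (u-1)^2 + 2*u*(1 - Real.cos (2*α*lam)) := by
        field_simp
        ring
      calc ((u⁻¹)^2 - 2*u⁻¹*Real.cos (2*α*lam) + 1)^3 * β^2 * u^6
          = (((u⁻¹)^2 - 2*u⁻¹*Real.cos (2*α*lam) + 1) * u^2)^3 * β^2 := by ring
        _ = ((u-1)^2 + 2*u*(1 - Real.cos (2*α*lam)))^3 * b^2 := by rw [h, hb]; ring
    have e2 : (u⁻¹ - 1)^6 * (α^2 + β^2) * u^6 = (u-1)^6 * (α^2 + b^2) := by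
      have h : (u⁻¹ - 1) * u = -(u - 1) := by field_simp; ring
      calc (u⁻¹ - 1)^6 * (α^2 + β^2) * u^6 = ((u⁻¹-1)*u)^6 * (α^2+β^2) := by ring
        _ = (u-1)^6 * (α^2 + b^2) := by rw [h, hb]; ring
    rw [e1, e2]
    exact hk
  · -- β > 0
    have habs : |β| = β := abs_of_pos hpos
    rw [habs] at hu
    have hk := key β α lam hpos hα hlam hu
    have e1 : (Real.exp (2*β*lam)^2 - 2*Real.exp (2*β*lam)*Real.cos (2*α*lam) + 1)
        = ((Real.exp (2*β*lam)-1)^2 + 2*Real.exp (2*β*lam)*(1 - Real.cos (2*α*lam))) := by ring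
    rw [e1]
    exact hk

lemma combo_pos (α β p ψ x : ℝ) (hα : 0 < α) (hβ : β ≠ 0)
    (hkey : (p^2 - 2*p*Real.cos ψ + 1)^3 * β^2 < (p-1)^6 * (α^2 + β^2))
    (hmain : 0 < (p-1)^3 / (4*β)) :
    0 < (p^3 - 3*p^2 + 3*p - 1)/(4*β)
      + (p^3 * (β * Real.cos (x+3*ψ) + α * Real.sin (x+3*ψ))
        - 3*p^2 * (β * Real.cos (x+2*ψ) + α * Real.sin (x+2*ψ))
        + 3*p * (β * Real.cos (x+ψ) + α * Real.sin (x+ψ))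
        - (β * Real.cos x + α * Real.sin x))/(4*(α^2+β^2)) := by
  have hβ2 : 0 < β^2 := by rcases hβ.lt_or_gt with h|h <;> nlinarith
  have hab : 0 < α^2 + β^2 := by positivity
  set N := (p^3 * (β * Real.cos (x+3*ψ) + α * Real.sin (x+3*ψ))
      - 3*p^2 * (β * Real.cos (x+2*ψ) + α * Real.sin (x+2*ψ))
      + 3*p * (β * Real.cos (x+ψ) + α * Real.sin (x+ψ))
      - (β * Real.cos x + α * Real.sin x)) with hN
  have hosc : N^2 ≤ (α^2+β^2) * (p^2 - 2*p*Real.cos ψ + 1)^3 := osc_num α β p ψ x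
  set m := (p-1)^3 / (4*β) with hm
  set s := N / (4*(α^2+β^2)) with hs
  have h1 : s^2 = N^2 / (16*(α^2+β^2)^2) := by
    rw [hs, div_pow]; congr 1; ring
  have h2 : m^2 = (p-1)^6 / (16*β^2) := by
    rw [hm, div_pow]; congr 1 <;> ring
  have h3 : N^2 / (16*(α^2+β^2)^2) ≤ (p^2 - 2*p*Real.cos ψ + 1)^3 / (16*(α^2+β^2)) := by
    rw [div_le_div_iff₀ (by positivity) (by positivity)]
    nlinarith [hosc, sq_nonneg (α^2+β^2)]
  have h4 : (p^2 - 2*p*Real.cos ψ + 1)^3 / (16*(α^2+β^2)) < (p-1)^6 / (16*β^2) := by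
    rw [div_lt_div_iff₀ (by positivity) (by positivity)]
    nlinarith [hkey]
  have hs2 : s^2 < m^2 := by rw [h1, h2]; linarith
  have hgoal : 0 < m + s := by linarith [(abs_lt_of_sq_lt_sq' hs2 hmain.le).1]
  have hq : (p^3 - 3*p^2 + 3*p - 1)/(4*β) = m := by rw [hm]; congr 1; ring
  rw [hq]
  exact hgoal

set_option maxHeartbeats 4000000 in
theorem three_circle_complex_roots :
    ∀ σ : ℝ, 0 < σ → ∃ K₀ : ℝ, 2 < K₀ ∧
      ∀ α β θ K : ℝ, 0 < α → σ ≤ |β| → K₀ ≤ K →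
        let I : ℝ → ℝ := fun r =>
          ∫ s in r..(K * r), Real.cos (α * Real.log s + θ) ^ 2 * s ^ (2 * β - 1)
        ∀ r : ℝ, 0 < r → I (K ^ 2 * r) - 2 * I (K * r) + I r > 0 := by
  intro σ hσ
  refine ⟨max 3 (Real.exp (10^8/σ)), ?_, ?_⟩
  · have h := le_max_left (3:ℝ) (Real.exp (10^8/σ)); linarith
  intro α β θ K hα hβσ hK I r hr
  have hβ0 : β ≠ 0 := by
    intro h; rw [h] at hβσ; simp at hβσ; linarith
  have hK3 : (3:ℝ) ≤ K := le_trans (le_max_left _ _) hK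
  have hK0 : (0:ℝ) < K := by linarith
  have hK1 : (1:ℝ) < K := by linarith
  have hlam : 0 < Real.log K := Real.log_pos hK1
  have hlamlb : 10^8/σ ≤ Real.log K := by
    have h1 : Real.exp (10^8/σ) ≤ K := le_trans (le_max_right _ _) hK
    have h2 := Real.log_le_log (Real.exp_pos _) h1
    rwa [Real.log_exp] at h2
  have hu : 2*10^7 ≤ Real.exp (2 * |β| * Real.log K) := by
    have h2 : (2*10^8 : ℝ) ≤ 2 * |β| * Real.log K := by
      have e : σ * (10^8/σ) = 10^8 := by field_simp
      have h3 : σ * (10^8/σ) ≤ |β| * Real.log K :=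
        mul_le_mul hβσ hlamlb (le_of_lt (div_pos (by norm_num) hσ)) (abs_nonneg β)
      rw [e] at h3; linarith
    have h3 := Real.add_one_le_exp (2 * |β| * Real.log K)
    linarith
  have hI : ∀ t : ℝ, I t = ∫ s in t..(K*t), Real.cos (α * Real.log s + θ)^2 * s^(2*β-1) :=
    fun t => rfl
  simp only [hI]
  rw [integral_eq α β θ hα hβ0 (by positivity : (0:ℝ) < K^2*r)
      (mul_pos hK0 (mul_pos (pow_pos hK0 2) hr)),
    integral_eq α β θ hα hβ0 (mul_pos hK0 hr) (mul_pos hK0 (mul_pos hK0 hr)),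
    integral_eq α β θ hα hβ0 hr (mul_pos hK0 hr)]
  have hFs : ∀ s : ℝ, 0 < s → Fant α β θ s = Real.exp (2*β*Real.log s) * (1/(4*β) +
      (β * Real.cos (2*α*Real.log s + 2*θ) + α * Real.sin (2*α*Real.log s + 2*θ))
        / (4*(α^2+β^2))) := by
    intro s hs
    unfold Fant
    rw [Real.rpow_def_of_pos hs, mul_comm (Real.log s) (2*β)]
  have hlog1 : Real.log (K*r) = Real.log K + Real.log r := Real.log_mul hK0.ne' hr.ne'
  have hlog2 : Real.log (K^2*r) = 2*Real.log K + Real.log r := by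
    rw [Real.log_mul (pow_ne_zero 2 hK0.ne') hr.ne', Real.log_pow]; push_cast; ring
  have hlog2' : Real.log (K*(K*r)) = 2*Real.log K + Real.log r := by
    rw [Real.log_mul hK0.ne' (mul_pos hK0 hr).ne', hlog1]; ring
  have hlog3 : Real.log (K*(K^2*r)) = 3*Real.log K + Real.log r := by
    rw [Real.log_mul hK0.ne' (mul_pos (pow_pos hK0 2) hr).ne', hlog2]; ring
  set lam := Real.log K with hlamdef
  set A := Real.log r with hAdef
  set p := Real.exp (2*β*lam) with hpdef
  set R := Real.exp (2*β*A) with hRdef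
  have hp0 : 0 < p := Real.exp_pos _
  have hR0 : 0 < R := Real.exp_pos _
  have hF0 : Fant α β θ r = R * (1/(4*β) +
      (β * Real.cos (2*α*A + 2*θ) + α * Real.sin (2*α*A + 2*θ))/(4*(α^2+β^2))) := by
    rw [hFs r hr]
  have hF1 : Fant α β θ (K*r) = (p*R) * (1/(4*β) +
      (β * Real.cos ((2*α*A + 2*θ) + 2*α*lam) + α * Real.sin ((2*α*A + 2*θ) + 2*α*lam))
        /(4*(α^2+β^2))) := by
    rw [hFs _ (mul_pos hK0 hr), hlog1,
      show 2*α*(lam + A) + 2*θ = (2*α*A + 2*θ) + 2*α*lam from by ring,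
      show 2*β*(lam + A) = 2*β*lam + 2*β*A from by ring, Real.exp_add]
  have hF2 : Fant α β θ (K^2*r) = (p*(p*R)) * (1/(4*β) +
      (β * Real.cos ((2*α*A + 2*θ) + 2*(2*α*lam)) + α * Real.sin ((2*α*A + 2*θ) + 2*(2*α*lam)))
        /(4*(α^2+β^2))) := by
    rw [hFs _ (by positivity), hlog2,
      show 2*α*(2*lam + A) + 2*θ = (2*α*A + 2*θ) + 2*(2*α*lam) from by ring,
      show 2*β*(2*lam + A) = 2*β*lam + (2*β*lam + 2*β*A) from by ring,
      Real.exp_add, Real.exp_add]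
  have hF2' : Fant α β θ (K*(K*r)) = (p*(p*R)) * (1/(4*β) +
      (β * Real.cos ((2*α*A + 2*θ) + 2*(2*α*lam)) + α * Real.sin ((2*α*A + 2*θ) + 2*(2*α*lam)))
        /(4*(α^2+β^2))) := by
    rw [hFs _ (mul_pos hK0 (mul_pos hK0 hr)), hlog2',
      show 2*α*(2*lam + A) + 2*θ = (2*α*A + 2*θ) + 2*(2*α*lam) from by ring,
      show 2*β*(2*lam + A) = 2*β*lam + (2*β*lam + 2*β*A) from by ring,
      Real.exp_add, Real.exp_add]
  have hF3 : Fant α β θ (K*(K^2*r)) = (p*(p*(p*R))) * (1/(4*β) +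
      (β * Real.cos ((2*α*A + 2*θ) + 3*(2*α*lam)) + α * Real.sin ((2*α*A + 2*θ) + 3*(2*α*lam)))
        /(4*(α^2+β^2))) := by
    rw [hFs _ (mul_pos hK0 (mul_pos (pow_pos hK0 2) hr)), hlog3,
      show 2*α*(3*lam + A) + 2*θ = (2*α*A + 2*θ) + 3*(2*α*lam) from by ring,
      show 2*β*(3*lam + A) = 2*β*lam + (2*β*lam + (2*β*lam + 2*β*A)) from by ring,
      Real.exp_add, Real.exp_add, Real.exp_add]
  have hmain : 0 < (p-1)^3 / (4*β) := by
    rcases hβ0.lt_or_gt with hneg | hpos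
    · have h1 : 2*β*lam < 0 := by nlinarith
      have h2 : p < 1 := by
        rw [hpdef, show (1:ℝ) = Real.exp 0 from (Real.exp_zero).symm]
        exact Real.exp_lt_exp.mpr h1
      have h3 : (p-1)^3 = -((1-p)^3) := by ring
      have h4 : 0 < (1-p)^3 := pow_pos (by linarith) 3
      apply div_pos_iff.mpr
      right
      constructor <;> linarith
    · have h1 : 0 < 2*β*lam := by positivity
      have h2 : 1 < p := by
        rw [hpdef, show (1:ℝ) = Real.exp 0 from (Real.exp_zero).symm]
        exact Real.exp_lt_exp.mpr h1
      exact div_pos (pow_pos (by linarith) 3) (by linarith)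
  have hkey : (p^2 - 2*p*Real.cos (2*α*lam) + 1)^3 * β^2 < (p-1)^6 * (α^2 + β^2) :=
    key' β α lam hβ0 hα hlam hu
  have hcombo := combo_pos α β p (2*α*lam) (2*α*A + 2*θ) hα hβ0 hkey hmain
  have hprod := mul_pos hR0 hcombo
  rw [hF0, hF1, hF2, hF2', hF3]
  exact lt_of_lt_of_eq hprod (by ring)
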